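/- Let (Ω, 𝒜, ℙ) be a probability space, let 𝒴 and 𝒳ₚ be finite nonempty sets, and let Y : Ω → 𝒴, Ỹ : Ω → 𝒴, Xₚ : Ω → 𝒳ₚ be measurable maps. Fix xₚ ∈ 𝒳ₚ with ℙ(Xₚ = xₚ) > 0 and fix ỹ ∈ 𝒴. Suppose that for every y ∈ 𝒴: (i) ℙ(Y = y | Xₚ = xₚ) = ℙ(Y = y), and (ii) whenever ℙ(Y = y ∩ Xₚ = xₚ) > 0, ℙ(Ỹ = ỹ | Y = y ∩ Xₚ = xₚ) = ℙ(Ỹ = ỹ | Y = y). Then Σ_{y ∈ 𝒴} ℙ(Ỹ = ỹ | Y = y ∩ Xₚ = xₚ)·ℙ(Y = y | Xₚ = xₚ) = ℙ(Ỹ = ỹ | Xₚ = xₚ), and this common value equals Σ_{y ∈ 𝒴, ℙ(Y = y) > 0} ℙ(Ỹ = ỹ | Y = y)·ℙ(Y = y) = ℙ(Ỹ = ỹ) (where in the first sum the terms with ℙ(Y = y ∩ Xₚ = xₚ) = 0 vanish because by (i) they have ℙ(Y = y | Xₚ = xₚ) = 0). -/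

import Mathlib

open MeasureTheory
open scoped Classical

/-- The chain of equalities
`ℙ(ỹ | xₚ) = Σ_y ℙ(ỹ | y ∩ xₚ)·ℙ(y | xₚ)` and
`ℙ(ỹ) = Σ_{y : ℙ(y) > 0} ℙ(ỹ | y)·ℙ(y)` with the two sums equal, constituting
the proof of Proposition 1 of the paper, for a fixed protected value `xp` of
positive probability and a fixed predicted label `yt`. -/
theorem total_probability_chain
    {Ω 𝒴 𝒳p : Type*} [MeasurableSpace Ω]
    [Fintype 𝒴] [Nonempty 𝒴] [MeasurableSpace 𝒴] [MeasurableSingletonClass 𝒴]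
    [Fintype 𝒳p] [Nonempty 𝒳p] [MeasurableSpace 𝒳p] [MeasurableSingletonClass 𝒳p]
    (μ : Measure Ω) [IsProbabilityMeasure μ]
    (Y Yt : Ω → 𝒴) (Xp : Ω → 𝒳p)
    (hY : Measurable Y) (hYt : Measurable Yt) (hXp : Measurable Xp)
    (xp : 𝒳p) (hxp : 0 < μ {ω | Xp ω = xp}) (yt : 𝒴)
    -- (i) no disparate impact of the true labels
    (h1 : ∀ y : 𝒴,
      μ ({ω | Y ω = y} ∩ {ω | Xp ω = xp}) / μ {ω | Xp ω = xp} = μ {ω | Y ω = y})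
    -- (ii) no disparate mistreatment of the classifier
    (h2 : ∀ y : 𝒴, 0 < μ ({ω | Y ω = y} ∩ {ω | Xp ω = xp}) →
      μ ({ω | Yt ω = yt} ∩ ({ω | Y ω = y} ∩ {ω | Xp ω = xp})) /
          μ ({ω | Y ω = y} ∩ {ω | Xp ω = xp})
        = μ ({ω | Yt ω = yt} ∩ {ω | Y ω = y}) / μ {ω | Y ω = y}) :
    (∑ y : 𝒴,
        (μ ({ω | Yt ω = yt} ∩ ({ω | Y ω = y} ∩ {ω | Xp ω = xp})) /
            μ ({ω | Y ω = y} ∩ {ω | Xp ω = xp})) *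
          (μ ({ω | Y ω = y} ∩ {ω | Xp ω = xp}) / μ {ω | Xp ω = xp})
      = μ ({ω | Yt ω = yt} ∩ {ω | Xp ω = xp}) / μ {ω | Xp ω = xp})
    ∧ (μ ({ω | Yt ω = yt} ∩ {ω | Xp ω = xp}) / μ {ω | Xp ω = xp}
      = ∑ y ∈ Finset.univ.filter (fun y : 𝒴 => 0 < μ {ω | Y ω = y}),
          (μ ({ω | Yt ω = yt} ∩ {ω | Y ω = y}) / μ {ω | Y ω = y}) * μ {ω | Y ω = y})
    ∧ (∑ y ∈ Finset.univ.filter (fun y : 𝒴 => 0 < μ {ω | Y ω = y}),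
          (μ ({ω | Yt ω = yt} ∩ {ω | Y ω = y}) / μ {ω | Y ω = y}) * μ {ω | Y ω = y}
      = μ {ω | Yt ω = yt}) := by

  classical
  have htop : ∀ s : Set Ω, μ s ≠ ⊤ := fun s => measure_ne_top μ s
  have key : ∀ a b c : ENNReal, b ≠ 0 → b ≠ ⊤ → a / b * (b / c) = a / c := by
    intro a b c hb hb'
    rw [div_eq_mul_inv, div_eq_mul_inv, div_eq_mul_inv]
    calc a * b⁻¹ * (b * c⁻¹) = a * c⁻¹ * (b⁻¹ * b) := by ring
      _ = a * c⁻¹ := by rw [ENNReal.inv_mul_cancel hb hb', mul_one]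
  have hpart : ∀ S : Set Ω, MeasurableSet S →
      μ S = ∑ y : 𝒴, μ (S ∩ {ω | Y ω = y}) := by
    intro S hS
    have hU : S = ⋃ y ∈ (Finset.univ : Finset 𝒴), S ∩ {ω | Y ω = y} := by
      ext ω; simp
    have hd : (↑(Finset.univ : Finset 𝒴) : Set 𝒴).PairwiseDisjoint
        (fun y => S ∩ {ω | Y ω = y}) := by
      intro y _ z _ hyz
      refine Set.disjoint_left.2 ?_
      rintro ω ⟨_, hy⟩ ⟨_, hz⟩
      exact hyz (hy.symm.trans hz)
    have hm : ∀ b ∈ (Finset.univ : Finset 𝒴), MeasurableSet (S ∩ {ω | Y ω = b}) :=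
      fun y _ => hS.inter (hY (measurableSet_singleton y))
    calc μ S = μ (⋃ y ∈ (Finset.univ : Finset 𝒴), S ∩ {ω | Y ω = y}) := by rw [← hU]
      _ = ∑ y : 𝒴, μ (S ∩ {ω | Y ω = y}) := measure_biUnion_finset hd hm
  have hA : MeasurableSet {ω | Yt ω = yt} := hYt (measurableSet_singleton yt)
  have hC : MeasurableSet {ω | Xp ω = xp} := hXp (measurableSet_singleton xp)
  -- Part 1
  have e1 : (∑ y : 𝒴,
        (μ ({ω | Yt ω = yt} ∩ ({ω | Y ω = y} ∩ {ω | Xp ω = xp})) /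
            μ ({ω | Y ω = y} ∩ {ω | Xp ω = xp})) *
          (μ ({ω | Y ω = y} ∩ {ω | Xp ω = xp}) / μ {ω | Xp ω = xp}))
      = μ ({ω | Yt ω = yt} ∩ {ω | Xp ω = xp}) / μ {ω | Xp ω = xp} := by
    have step : ∀ y : 𝒴,
        (μ ({ω | Yt ω = yt} ∩ ({ω | Y ω = y} ∩ {ω | Xp ω = xp})) /
            μ ({ω | Y ω = y} ∩ {ω | Xp ω = xp})) *
          (μ ({ω | Y ω = y} ∩ {ω | Xp ω = xp}) / μ {ω | Xp ω = xp})
        = μ ({ω | Yt ω = yt} ∩ ({ω | Y ω = y} ∩ {ω | Xp ω = xp})) / μ {ω | Xp ω = xp} := by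
      intro y
      by_cases hz : μ ({ω | Y ω = y} ∩ {ω | Xp ω = xp}) = 0
      · have hnum : μ ({ω | Yt ω = yt} ∩ ({ω | Y ω = y} ∩ {ω | Xp ω = xp})) = 0 :=
          le_antisymm (hz ▸ measure_mono Set.inter_subset_right) zero_le
        simp [hz, hnum]
      · exact key _ _ _ hz (htop _)
    rw [Finset.sum_congr rfl (fun y _ => step y)]
    have hsum : ∑ y : 𝒴, μ ({ω | Yt ω = yt} ∩ ({ω | Y ω = y} ∩ {ω | Xp ω = xp}))
        = μ ({ω | Yt ω = yt} ∩ {ω | Xp ω = xp}) := by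
      rw [hpart _ (hA.inter hC)]
      refine Finset.sum_congr rfl fun y _ => ?_
      congr 1
      ext ω; simp [Set.mem_inter_iff]; tauto
    calc ∑ y : 𝒴, μ ({ω | Yt ω = yt} ∩ ({ω | Y ω = y} ∩ {ω | Xp ω = xp})) / μ {ω | Xp ω = xp}
        = (∑ y : 𝒴, μ ({ω | Yt ω = yt} ∩ ({ω | Y ω = y} ∩ {ω | Xp ω = xp}))) / μ {ω | Xp ω = xp} := by
          simp only [div_eq_mul_inv]; rw [Finset.sum_mul]
      _ = μ ({ω | Yt ω = yt} ∩ {ω | Xp ω = xp}) / μ {ω | Xp ω = xp} := by rw [hsum]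
  refine ⟨e1, ?_, ?_⟩
  -- Part 2
  · rw [← e1]
    have step : ∀ y : 𝒴,
        (μ ({ω | Yt ω = yt} ∩ ({ω | Y ω = y} ∩ {ω | Xp ω = xp})) /
            μ ({ω | Y ω = y} ∩ {ω | Xp ω = xp})) *
          (μ ({ω | Y ω = y} ∩ {ω | Xp ω = xp}) / μ {ω | Xp ω = xp})
        = (μ ({ω | Yt ω = yt} ∩ {ω | Y ω = y}) / μ {ω | Y ω = y}) * μ {ω | Y ω = y} := by
      intro y
      by_cases hz : μ ({ω | Y ω = y} ∩ {ω | Xp ω = xp}) = 0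
      · have hY0 : μ {ω | Y ω = y} = 0 := by
          rw [← h1 y, hz, ENNReal.zero_div]
        have hnum : μ ({ω | Yt ω = yt} ∩ ({ω | Y ω = y} ∩ {ω | Xp ω = xp})) = 0 :=
          le_antisymm (hz ▸ measure_mono Set.inter_subset_right) zero_le
        simp [hz, hnum, hY0]
      · rw [h2 y (pos_iff_ne_zero.2 hz), h1 y]
    rw [Finset.sum_congr rfl (fun y _ => step y)]
    refine (Finset.sum_subset (Finset.filter_subset _ _) ?_).symm
    intro y _ hy
    have hY0 : μ {ω | Y ω = y} = 0 := by
      by_contra h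
      exact hy (Finset.mem_filter.2 ⟨Finset.mem_univ y, pos_iff_ne_zero.2 h⟩)
    simp [hY0]
  -- Part 3
  · have step : ∀ y ∈ Finset.univ.filter (fun y : 𝒴 => 0 < μ {ω | Y ω = y}),
        (μ ({ω | Yt ω = yt} ∩ {ω | Y ω = y}) / μ {ω | Y ω = y}) * μ {ω | Y ω = y}
        = μ ({ω | Yt ω = yt} ∩ {ω | Y ω = y}) := by
      intro y hy
      have hpos := (Finset.mem_filter.1 hy).2
      exact ENNReal.div_mul_cancel (pos_iff_ne_zero.1 hpos) (htop _)
    rw [Finset.sum_congr rfl step]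
    rw [hpart _ hA]
    refine Finset.sum_subset (Finset.filter_subset _ _) ?_
    intro y _ hy
    have hY0 : μ {ω | Y ω = y} = 0 := by
      by_contra h
      exact hy (Finset.mem_filter.2 ⟨Finset.mem_univ y, pos_iff_ne_zero.2 h⟩)
    exact le_antisymm (hY0 ▸ measure_mono Set.inter_subset_right) zero_le
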